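/- arXiv:2605.17872 — 4 statements merged into one kernel-verified Lean document; each statement's English description precedes it below -/
import Mathlib

section
/- For every integer n ≥ 2 and positive integer m, ∏_{k=1}^∞ (1 − n^{−k}) · n^{φ(m)} ≤ Φ_m(n) ≤ n^{φ(m)} / ∏_{k=1}^∞ (1 − n^{−k}). -/
open Polynomial Finset

lemma cyclo_prod_aux {n : ℕ} (hn : 2 ≤ n) :
    (0 < ∏' k : ℕ, (1 - ((n : ℝ) ^ (k + 1))⁻¹)) ∧
      ∀ S : Finset ℕ, (∏' k : ℕ, (1 - ((n : ℝ) ^ (k + 1))⁻¹)) ≤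
        ∏ k ∈ S, (1 - ((n : ℝ) ^ (k + 1))⁻¹) := by
  have hN : (2:ℝ) ≤ (n:ℝ) := by exact_mod_cast hn
  have hx : ∀ k : ℕ, ((n : ℝ) ^ (k + 1))⁻¹ ≤ 1/2 := by
    intro k
    rw [inv_le_comm₀ (by positivity) (by norm_num)]
    calc (1/2:ℝ)⁻¹ = 2 := by norm_num
    _ ≤ (n:ℝ) ^ 1 := by simpa using hN
    _ ≤ (n:ℝ) ^ (k+1) := pow_le_pow_right₀ (by linarith) (by omega)
  have hxpos : ∀ k : ℕ, 0 < ((n : ℝ) ^ (k + 1))⁻¹ := fun k => by positivity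
  have hpos : ∀ k : ℕ, 0 < 1 - ((n : ℝ) ^ (k + 1))⁻¹ := by
    intro k; have := hx k; linarith
  set L : ℕ → ℝ := fun k => Real.log (1 - ((n : ℝ) ^ (k + 1))⁻¹) with hLdef
  have hLnonpos : ∀ k, L k ≤ 0 := fun k =>
    Real.log_nonpos (by have := hx k; linarith) (by have := hxpos k; linarith)
  have hL : Summable L := by
    rw [← summable_neg_iff]
    have hgeom : Summable (fun k : ℕ => 4 * ((n:ℝ)⁻¹) ^ (k+1)) := by
      apply Summable.mul_left
      apply Summable.comp_injective (i := fun k : ℕ => k + 1)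
        (summable_geometric_of_lt_one (by positivity) ?_) (add_left_injective 1)
      rw [inv_lt_one_iff₀]; right; linarith
    refine Summable.of_nonneg_of_le (fun k => ?_) (fun k => ?_) hgeom
    · simpa using hLnonpos k
    · have h1 := Real.one_sub_inv_le_log_of_pos (hpos k)
      have h2 : (1 - ((n : ℝ) ^ (k + 1))⁻¹)⁻¹ ≤ 2 := by
        rw [inv_le_comm₀ (hpos k) (by norm_num)]
        have := hx k; linarith
      have h3 : ((n:ℝ)⁻¹) ^ (k+1) = ((n : ℝ) ^ (k + 1))⁻¹ := by rw [inv_pow]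
      have h4 : (1 - ((n : ℝ) ^ (k + 1))⁻¹) * (1 - ((n : ℝ) ^ (k + 1))⁻¹)⁻¹ = 1 :=
        mul_inv_cancel₀ (hpos k).ne'
      simp only [hLdef]
      rw [h3]
      nlinarith [hxpos k, hx k]
  have hprod : HasProd (fun k : ℕ => (1 - ((n : ℝ) ^ (k + 1))⁻¹)) (Real.exp (∑' k, L k)) := by
    have := hL.hasSum.rexp
    convert this using 1
    funext k
    simp only [Function.comp_apply, hLdef]
    rw [Real.exp_log (hpos k)]
  have hPeq : (∏' k : ℕ, (1 - ((n : ℝ) ^ (k + 1))⁻¹)) = Real.exp (∑' k, L k) :=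
    hprod.tprod_eq
  rw [hPeq]
  refine ⟨Real.exp_pos _, fun S => ?_⟩
  have hSeq : ∏ k ∈ S, (1 - ((n : ℝ) ^ (k + 1))⁻¹) = Real.exp (∑ k ∈ S, L k) := by
    rw [Real.exp_sum]
    exact prod_congr rfl fun k _ => (Real.exp_log (hpos k)).symm
  rw [hSeq, Real.exp_le_exp]
  have h5 := Summable.sum_le_tsum (f := fun k => -L k) S (fun k _ => by simpa using hLnonpos k) hL.neg
  rw [tsum_neg] at h5
  rw [Finset.sum_neg_distrib] at h5
  linarith

lemma my_zpow_sum {β : Type*} {a : ℝ} (ha : a ≠ 0) (s : Finset β) (e : β → ℤ) :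
    a ^ (∑ x ∈ s, e x) = ∏ x ∈ s, a ^ e x := by
  classical
  induction s using Finset.cons_induction with
  | empty => simp
  | cons x s hx ih => rw [Finset.sum_cons, Finset.prod_cons, zpow_add₀ ha, ih]

/-- For `n ≥ 2` and `m ≥ 1`,
`∏_{k=1}^∞ (1 - n^{-k}) · n^{φ(m)} ≤ Φ_m(n) ≤ n^{φ(m)} / ∏_{k=1}^∞ (1 - n^{-k})`. -/
theorem cyclotomic_eval_bounds (n : ℕ) (hn : 2 ≤ n) (m : ℕ) (hm : 1 ≤ m) :
    (∏' k : ℕ, (1 - ((n : ℝ) ^ (k + 1))⁻¹)) * (n : ℝ) ^ (Nat.totient m) ≤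
        (((cyclotomic m ℤ).eval (n : ℤ) : ℤ) : ℝ) ∧
      (((cyclotomic m ℤ).eval (n : ℤ) : ℤ) : ℝ) ≤
        (n : ℝ) ^ (Nat.totient m) / ∏' k : ℕ, (1 - ((n : ℝ) ^ (k + 1))⁻¹) := by
  classical
  obtain ⟨hPpos, hPle⟩ := cyclo_prod_aux hn
  set P : ℝ := ∏' k : ℕ, (1 - ((n : ℝ) ^ (k + 1))⁻¹) with hPdef
  have hN : (2:ℝ) ≤ (n:ℝ) := by exact_mod_cast hn
  have hN0 : (n:ℝ) ≠ 0 := by linarith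
  set c : ℕ → ℝ := fun d => (((cyclotomic d ℤ).eval (n : ℤ) : ℤ) : ℝ) with hcdef
  -- Möbius inversion for the cyclotomic product identity
  have hcpos : ∀ d : ℕ, (0:ℝ) < c d := by
    intro d
    have : (0:ℤ) < (cyclotomic d ℤ).eval (n:ℤ) :=
      cyclotomic_pos' d (by exact_mod_cast hn : (1:ℤ) < (n:ℤ))
    simp only [hcdef]
    exact_mod_cast this
  have hdiv : ∀ k > 0, ∏ d ∈ Nat.divisors k, c d = (n:ℝ)^k - 1 := by
    intro k hk
    have h := congrArg (fun p : ℤ[X] => ((p.eval (n:ℤ) : ℤ) : ℝ))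
      (prod_cyclotomic_eq_X_pow_sub_one hk ℤ)
    simp only [eval_prod, eval_sub, eval_pow, eval_X, eval_one] at h
    push_cast at h
    exact h
  have hmoeb : ∏ x ∈ Nat.divisorsAntidiagonal m,
      ((n:ℝ)^x.2 - 1) ^ (ArithmeticFunction.moebius x.1) = c m := by
    refine (ArithmeticFunction.prod_eq_iff_prod_pow_moebius_eq_of_nonzero
      (f := c) (g := fun k => (n:ℝ)^k - 1) (fun d _ => (hcpos d).ne') ?_).mp hdiv m hm
    intro k hk
    have h1 : (n:ℝ)^1 ≤ (n:ℝ)^k := pow_le_pow_right₀ (by linarith) hk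
    have : (2:ℝ) ≤ (n:ℝ)^k := le_trans (by simpa using hN) h1
    intro hzero
    rw [sub_eq_zero] at hzero
    linarith [hzero ▸ this]
  have htot : ∑ x ∈ Nat.divisorsAntidiagonal m,
      (ArithmeticFunction.moebius x.1) • ((x.2 : ℤ)) = (Nat.totient m : ℤ) := by
    refine (ArithmeticFunction.sum_eq_iff_sum_smul_moebius_eq
      (f := fun d => (Nat.totient d : ℤ)) (g := fun k => (k : ℤ))).mp ?_ m hm
    intro k hk
    exact_mod_cast Nat.sum_totient k
  -- factor bounds
  set A := Nat.divisorsAntidiagonal m with hAdef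
  set g : ℕ × ℕ → ℝ := fun x => 1 - ((n:ℝ)^x.2)⁻¹ with hgdef
  have hb : ∀ x ∈ A, 1 ≤ x.2 := by
    intro x hx
    rcases Nat.mem_divisorsAntidiagonal.mp hx with ⟨h1, h2⟩
    rcases Nat.eq_zero_or_pos x.2 with h | h
    · exact absurd (h1 ▸ by simp [h]) h2
    · exact h
  have hg0 : ∀ x ∈ A, 0 < g x := by
    intro x hx
    have h1 : (2:ℝ) ≤ (n:ℝ)^x.2 := by
      have h := pow_le_pow_right₀ (by linarith : (1:ℝ) ≤ n) (hb x hx)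
      exact le_trans (by simpa using hN) h
    have h2 : ((n:ℝ)^x.2)⁻¹ ≤ 1/2 := by
      rw [inv_le_comm₀ (by positivity) (by norm_num)]
      norm_num; linarith
    simp only [hgdef]; linarith
  have hg1 : ∀ x ∈ A, g x ≤ 1 := by
    intro x hx
    have : 0 < ((n:ℝ)^x.2)⁻¹ := by positivity
    simp only [hgdef]; linarith
  have hmu_le : ∀ a : ℕ, ArithmeticFunction.moebius a ≤ 1 :=
    fun a => (abs_le.mp ArithmeticFunction.abs_moebius_le_one).2
  have hmu_ge : ∀ a : ℕ, -1 ≤ ArithmeticFunction.moebius a :=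
    fun a => (abs_le.mp ArithmeticFunction.abs_moebius_le_one).1
  -- rewrite c m as n^φ(m) * Q
  have hQ : c m = (n:ℝ) ^ (Nat.totient m) *
      ∏ x ∈ A, (g x) ^ (ArithmeticFunction.moebius x.1) := by
    rw [← hmoeb]
    have hsplit : ∀ x ∈ A, ((n:ℝ)^x.2 - 1) ^ (ArithmeticFunction.moebius x.1)
        = ((n:ℝ)^x.2) ^ (ArithmeticFunction.moebius x.1) *
          (g x) ^ (ArithmeticFunction.moebius x.1) := by
      intro x hx
      rw [← mul_zpow]
      congr 1
      have hne : ((n:ℝ)^x.2) ≠ 0 := by positivity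
      simp only [hgdef]; rw [mul_sub, mul_one, mul_inv_cancel₀ hne]
    rw [Finset.prod_congr rfl hsplit, Finset.prod_mul_distrib]
    congr 1
    have h1 : ∀ x ∈ A, ((n:ℝ)^x.2) ^ (ArithmeticFunction.moebius x.1)
        = (n:ℝ) ^ ((ArithmeticFunction.moebius x.1) * (x.2:ℤ)) := by
      intro x hx
      rw [← zpow_natCast (n:ℝ) x.2, ← zpow_mul, mul_comm]
    rw [Finset.prod_congr rfl h1, ← my_zpow_sum hN0]
    have h2 : ∑ x ∈ A, (ArithmeticFunction.moebius x.1) * (x.2:ℤ) = (Nat.totient m : ℤ) := by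
      simpa [zsmul_eq_mul] using htot
    rw [h2, zpow_natCast]
  set Pr : ℝ := ∏ x ∈ A, g x with hPrdef
  have hPrpos : 0 < Pr := Finset.prod_pos hg0
  have hlow : Pr ≤ ∏ x ∈ A, (g x) ^ (ArithmeticFunction.moebius x.1) := by
    refine Finset.prod_le_prod (fun x hx => (hg0 x hx).le) (fun x hx => ?_)
    calc g x = g x ^ (1:ℤ) := (zpow_one _).symm
    _ ≤ g x ^ (ArithmeticFunction.moebius x.1) :=
      zpow_le_zpow_right_of_le_one₀ (hg0 x hx) (hg1 x hx) (hmu_le x.1)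
  have hup : ∏ x ∈ A, (g x) ^ (ArithmeticFunction.moebius x.1) ≤ Pr⁻¹ := by
    rw [hPrdef, ← Finset.prod_inv_distrib]
    refine Finset.prod_le_prod (fun x hx => (zpow_pos (hg0 x hx) _).le) (fun x hx => ?_)
    calc (g x) ^ (ArithmeticFunction.moebius x.1)
        ≤ g x ^ (-1:ℤ) :=
          zpow_le_zpow_right_of_le_one₀ (hg0 x hx) (hg1 x hx) (hmu_ge x.1)
    _ = (g x)⁻¹ := by rw [zpow_neg_one]
  have hPPr : P ≤ Pr := by
    have hinj : ∀ x ∈ A, ∀ y ∈ A, x.2 - 1 = y.2 - 1 → x = y := by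
      intro x hx y hy hxy
      have hx2 : x.2 = y.2 := by have := hb x hx; have := hb y hy; omega
      rcases Nat.mem_divisorsAntidiagonal.mp hx with ⟨h1, _⟩
      rcases Nat.mem_divisorsAntidiagonal.mp hy with ⟨h2, _⟩
      have : x.1 = y.1 := by
        have hy2 : 0 < y.2 := hb y hy
        apply Nat.eq_of_mul_eq_mul_right hy2
        rw [← hx2] at h2 ⊢
        rw [h1, ← h2, hx2]
      exact Prod.ext this hx2
    have := hPle (A.image (fun x => x.2 - 1))
    rw [Finset.prod_image hinj] at this
    refine le_trans this (le_of_eq (Finset.prod_congr rfl fun x hx => ?_))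
    have : x.2 - 1 + 1 = x.2 := by have := hb x hx; omega
    rw [this]
  constructor
  · calc P * (n:ℝ) ^ (Nat.totient m) ≤ Pr * (n:ℝ) ^ (Nat.totient m) :=
      mul_le_mul_of_nonneg_right hPPr (by positivity)
    _ ≤ (∏ x ∈ A, (g x) ^ (ArithmeticFunction.moebius x.1)) * (n:ℝ) ^ (Nat.totient m) :=
      mul_le_mul_of_nonneg_right hlow (by positivity)
    _ = c m := by rw [hQ]; ring
  · show c m ≤ _
    rw [hQ, div_eq_mul_inv]
    refine mul_le_mul_of_nonneg_left (le_trans hup ?_) (by positivity)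
    exact inv_anti₀ hPpos hPPr
end

section
/- Let q be an odd prime, p a prime with p ≠ q and p^k ≢ 1 (mod q), and α a nonnegative integer such that ϖ_k := ord_q(p^k) divides α + 1. Then v_q(σ_k(p^α)) = v_q(α + 1) + v_q(p^{k·ϖ_k} − 1). -/
open ArithmeticFunction

lemma geom_sum_nat_aux (x n : ℕ) (hx : 1 ≤ x) :
    (x - 1) * ∑ i ∈ Finset.range n, x ^ i = x ^ n - 1 := by
  have hxn : 1 ≤ x ^ n := Nat.one_le_pow _ _ hx
  have := geom_sum_mul (x : ℤ) n
  have h : ((x - 1 : ℕ) : ℤ) * ((∑ i ∈ Finset.range n, x ^ i : ℕ) : ℤ)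
      = ((x ^ n - 1 : ℕ) : ℤ) := by
    push_cast [Nat.cast_sub hx, Nat.cast_sub hxn]
    linarith [geom_sum_mul (x : ℤ) n]
  exact_mod_cast h

/-- If `q` is an odd prime, `p ≠ q` a prime with `p^k ≢ 1 (mod q)`, and
`ϖ_k := ord_q(p^k)` divides `α + 1`, then
`v_q(σ_k(p^α)) = v_q(α + 1) + v_q(p^{k·ϖ_k} − 1)`. -/
theorem valuation_sigma_of_order_dvd (q p : ℕ) (hq : q.Prime) (hodd : Odd q)
    (hp : p.Prime) (hpq : p ≠ q) (k : ℕ) (hcong : ¬ p ^ k ≡ 1 [MOD q])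
    (α : ℕ) (hdvd : orderOf ((p : ZMod q) ^ k) ∣ α + 1) :
    padicValNat q (sigma k (p ^ α)) =
      padicValNat q (α + 1) +
        padicValNat q (p ^ (k * orderOf ((p : ZMod q) ^ k)) - 1) := by
  haveI : Fact q.Prime := ⟨hq⟩
  have hq2 : 2 ≤ q := hq.two_le
  set d := orderOf ((p : ZMod q) ^ k) with hd
  obtain ⟨m, hm⟩ := hdvd
  -- basic facts
  have hk : k ≠ 0 := by
    rintro rfl
    exact hcong (by simp [Nat.ModEq.refl])
  have hqp : ¬ q ∣ p := by
    intro h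
    exact hpq ((Nat.prime_dvd_prime_iff_eq hq hp).mp h).symm
  have hpz : (p : ZMod q) ≠ 0 := by
    rwa [Ne, ZMod.natCast_eq_zero_iff]
  have hpk : ((p : ZMod q) ^ k) ≠ 0 := pow_ne_zero _ hpz
  have hd0 : d ≠ 0 := by
    have : ((p : ZMod q) ^ k) ^ (q - 1) = 1 := ZMod.pow_card_sub_one_eq_one hpk
    have hdvd' : d ∣ q - 1 := orderOf_dvd_of_pow_eq_one this
    intro h
    rw [h] at hdvd'
    have : q - 1 = 0 := Nat.eq_zero_of_zero_dvd hdvd'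
    omega
  have hqd : ¬ q ∣ d := by
    have : ((p : ZMod q) ^ k) ^ (q - 1) = 1 := ZMod.pow_card_sub_one_eq_one hpk
    have hdvd' : d ∣ q - 1 := orderOf_dvd_of_pow_eq_one this
    intro h
    have hle : d ≤ q - 1 := Nat.le_of_dvd (by omega) hdvd'
    have := Nat.le_of_dvd (by omega) h
    omega
  have hm0 : m ≠ 0 := by rintro rfl; omega
  have hp1 : 2 ≤ p := hp.two_le
  set x := p ^ (k * d) with hx
  have hx1 : 1 < x := Nat.one_lt_pow (by positivity) hp1
  -- q ∣ x - 1
  have hxmod : (x : ZMod q) = 1 := by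
    rw [hx]
    push_cast
    rw [pow_mul]
    exact pow_orderOf_eq_one _
  have hqx1 : q ∣ x - 1 := by
    have : (x : ZMod q) = ((1 : ℕ) : ZMod q) := by simpa using hxmod
    have hmod := (ZMod.natCast_eq_natCast_iff _ _ _).mp this
    exact (Nat.modEq_iff_dvd' (by omega)).mp hmod.symm
  have hqx : ¬ q ∣ x := fun h => hqp (hq.dvd_of_dvd_pow h)
  -- LTE
  have hlte : padicValNat q (x ^ m - 1 ^ m) =
      padicValNat q (x - 1) + padicValNat q m := by
    exact padicValNat.pow_sub_pow hodd hx1 (by simpa using hqx1) hqx hm0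
  -- σ_k(p^α) via geometric sum
  have hsigma : sigma k (p ^ α) = ∑ j ∈ Finset.range (α + 1), (p ^ k) ^ j := by
    rw [sigma_apply_prime_pow hp]
    refine Finset.sum_congr rfl fun j _ => ?_
    rw [← pow_mul, mul_comm]
  have hpk1 : 1 ≤ p ^ k := Nat.one_le_pow _ _ (by omega)
  have hgeom : (p ^ k - 1) * sigma k (p ^ α) = p ^ (k * (α + 1)) - 1 := by
    rw [hsigma, geom_sum_nat_aux _ _ hpk1, ← pow_mul]
  -- v_q(p^k - 1) = 0
  have hpkne : ¬ q ∣ (p ^ k - 1) := by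
    intro h
    apply hcong
    exact ((Nat.modEq_iff_dvd' hpk1).mpr h).symm
  have hv0 : padicValNat q (p ^ k - 1) = 0 := padicValNat.eq_zero_of_not_dvd hpkne
  have hpk1' : p ^ k - 1 ≠ 0 := by
    have : 2 ≤ p ^ k := by
      calc 2 ≤ p := hp1
      _ ≤ p ^ k := Nat.le_self_pow hk p
    omega
  have hσ0 : sigma k (p ^ α) ≠ 0 := by
    rw [hsigma]
    have : 0 < ∑ j ∈ Finset.range (α + 1), (p ^ k) ^ j :=
      Finset.sum_pos (fun j _ => pow_pos (by positivity) j) (by simp)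
    omega
  have hmain : padicValNat q (sigma k (p ^ α)) = padicValNat q (p ^ (k * (α + 1)) - 1) := by
    have := padicValNat.mul (p := q) hpk1' hσ0
    rw [hgeom] at this
    omega
  -- combine
  have hxm : x ^ m = p ^ (k * (α + 1)) := by
    rw [hx, ← pow_mul, hm, mul_assoc]
  have hvn : padicValNat q (α + 1) = padicValNat q m := by
    rw [hm, padicValNat.mul hd0 hm0, padicValNat.eq_zero_of_not_dvd hqd, zero_add]
  rw [hmain, ← hxm, hvn]
  have : x ^ m - 1 = x ^ m - 1 ^ m := by simp
  rw [this, hlte]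
  omega
end

section
/- Let n ≥ 2, k ≥ 1 be integers and q ≥ 3 a prime. Then v_q(σ_k(n)) = ∑ v_q(α+1) over prime powers p^α exactly dividing n with p^k ≡ 1 (mod q), plus ∑ ( v_q(α+1) + v_q(k) + v_q(Φ_{ϖ_1}(p)) ) over prime powers p^α exactly dividing n with p ≠ q, p^k ≢ 1 (mod q), and ϖ_k ∣ α + 1, where ϖ_1 = ord_q(p) and ϖ_k = ord_q(p^k). -/
open Polynomial ArithmeticFunction Finset

section Helpers

variable {q : ℕ}

lemma cast_eq_one_iff_dvd (hq1 : 1 < q) {y : ℕ} (hy : 1 ≤ y) :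
    (y : ZMod q) = 1 ↔ q ∣ y - 1 := by
  haveI : NeZero q := ⟨by omega⟩
  rw [← ZMod.natCast_eq_zero_iff, Nat.cast_sub hy, Nat.cast_one, sub_eq_zero, eq_comm]

lemma padicValNat_prod (hq : q.Prime) {s : Finset ℕ} {f : ℕ → ℕ}
    (hf : ∀ p ∈ s, f p ≠ 0) :
    padicValNat q (∏ p ∈ s, f p) = ∑ p ∈ s, padicValNat q (f p) := by
  haveI : Fact q.Prime := ⟨hq⟩
  induction s using Finset.cons_induction with
  | empty => simp
  | cons a s ha ih =>
    rw [Finset.prod_cons, Finset.sum_cons,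
      padicValNat.mul (hf a (Finset.mem_cons_self a s))
        (Finset.prod_ne_zero_iff.mpr fun b hb => hf b (Finset.mem_cons_of_mem hb)),
      ih fun b hb => hf b (Finset.mem_cons_of_mem hb)]

/-- `v_q(p^d - 1) = v_q(Φ_d(p))` where `d = ord_q(p)`. -/
lemma val_pow_ord_sub_one (hq : q.Prime) {p : ℕ} (hp : p.Prime) (hqp : ¬ q ∣ p) :
    padicValNat q (p ^ orderOf (p : ZMod q) - 1) =
      padicValInt q ((cyclotomic (orderOf ((p : ZMod q))) ℤ).eval (p : ℤ)) := by
  haveI : Fact q.Prime := ⟨hq⟩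
  set d := orderOf (p : ZMod q) with hd_def
  have hpz : (p : ZMod q) ≠ 0 := by
    rw [Ne, ZMod.natCast_eq_zero_iff]; exact hqp
  have hfin : IsOfFinOrder (p : ZMod q) :=
    isOfFinOrder_iff_pow_eq_one.mpr
      ⟨q - 1, by have := hq.two_le; omega, ZMod.pow_card_sub_one_eq_one hpz⟩
  have hd : 0 < d := hfin.orderOf_pos
  have hprod : ∀ e : ℕ, 0 < e →
      (∏ i ∈ e.divisors, (cyclotomic i ℤ).eval (p : ℤ)) = (p : ℤ) ^ e - 1 := by
    intro e he
    rw [← Polynomial.eval_prod, prod_cyclotomic_eq_X_pow_sub_one he ℤ]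
    simp
  have hcyc_dvd : ∀ e : ℕ, 0 < e → ((cyclotomic e ℤ).eval (p : ℤ)) ∣ (p : ℤ) ^ e - 1 :=
    fun e he => (hprod e he) ▸ Finset.dvd_prod_of_mem _ (Nat.mem_divisors_self e he.ne')
  have hsplit : (p : ℤ) ^ d - 1 =
      (cyclotomic d ℤ).eval (p : ℤ) *
        ∏ i ∈ d.divisors.erase d, (cyclotomic i ℤ).eval (p : ℤ) := by
    rw [← hprod d hd]
    exact (Finset.mul_prod_erase _ _ (Nat.mem_divisors_self d hd.ne')).symm
  have hne : (p : ℤ) ^ d - 1 ≠ 0 := by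
    have h1 : (1 : ℤ) < (p : ℤ) ^ d := by
      exact_mod_cast Nat.one_lt_pow hd.ne' hp.one_lt
    omega
  have hR : ¬ (q : ℤ) ∣ ∏ i ∈ d.divisors.erase d, (cyclotomic i ℤ).eval (p : ℤ) := by
    intro h
    obtain ⟨e, he, hdvd⟩ := (Nat.prime_iff_prime_int.mp hq).exists_mem_finset_dvd h
    have heD := Finset.mem_of_mem_erase he
    have hene := Finset.ne_of_mem_erase he
    obtain ⟨hed, -⟩ := Nat.mem_divisors.mp heD
    have he0 : 0 < e := Nat.pos_of_dvd_of_pos hed hd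
    have hq1 : (q : ℤ) ∣ (p : ℤ) ^ e - 1 := hdvd.trans (hcyc_dvd e he0)
    have hcast : ((p : ZMod q)) ^ e = 1 := by
      have := (ZMod.intCast_zmod_eq_zero_iff_dvd _ q).mpr hq1
      push_cast at this
      rwa [sub_eq_zero] at this
    exact hene (Nat.dvd_antisymm hed (orderOf_dvd_of_pow_eq_one hcast))
  have hΦne : (cyclotomic d ℤ).eval (p : ℤ) ≠ 0 := fun h => hne (by rw [hsplit, h, zero_mul])
  have hRne : (∏ i ∈ d.divisors.erase d, (cyclotomic i ℤ).eval (p : ℤ)) ≠ 0 :=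
    fun h => hne (by rw [hsplit, h, mul_zero])
  have hcast2 : padicValNat q (p ^ d - 1) = padicValInt q ((p : ℤ) ^ d - 1) := by
    rw [← padicValInt.of_nat]
    congr 1
    have : 1 ≤ p ^ d := Nat.one_le_pow _ _ hp.pos
    push_cast [this]
    ring
  rw [hcast2, hsplit, padicValInt.mul hΦne hRne, padicValInt.eq_zero_of_not_dvd hR, add_zero]

lemma key_lemma (hq : q.Prime) (hq3 : 3 ≤ q) {k : ℕ} (hk : 1 ≤ k)
    {p : ℕ} (hp : p.Prime) {α : ℕ} (hα : 1 ≤ α) :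
    padicValNat q (sigma k (p ^ α)) =
      (if ((p : ZMod q)) ^ k = 1 then padicValNat q (α + 1) else 0) +
      (if p ≠ q ∧ ((p : ZMod q)) ^ k ≠ 1 ∧ orderOf (((p : ZMod q)) ^ k) ∣ α + 1
        then padicValNat q (α + 1) + padicValNat q k +
          padicValInt q ((cyclotomic (orderOf ((p : ZMod q))) ℤ).eval (p : ℤ))
        else 0) := by
  haveI : Fact q.Prime := ⟨hq⟩
  haveI : NeZero q := ⟨by omega⟩
  have hx2 : 2 ≤ p ^ k := Nat.one_lt_pow (by omega) hp.one_lt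
  have hm0 : α + 1 ≠ 0 := by omega
  have hσ : sigma k (p ^ α) = ∑ j ∈ Finset.range (α + 1), (p ^ k) ^ j := by
    rw [sigma_apply_prime_pow hp]
    exact Finset.sum_congr rfl fun j _ => by rw [mul_comm, pow_mul]
  have hGpos : 0 < ∑ j ∈ Finset.range (α + 1), (p ^ k) ^ j :=
    Finset.sum_pos (fun j _ => pow_pos (by omega) _) ⟨0, Finset.mem_range.mpr (by omega)⟩
  have hid : (∑ j ∈ Finset.range (α + 1), (p ^ k) ^ j) * (p ^ k - 1) = (p ^ k) ^ (α + 1) - 1 := by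
    have h1 : 1 ≤ p ^ k := by omega
    have h2 : 1 ≤ (p ^ k) ^ (α + 1) := Nat.one_le_pow _ _ (by omega)
    zify [h1, h2]
    push_cast
    exact geom_sum_mul ((p : ℤ) ^ k) (α + 1)
  have hcastx : (((p ^ k : ℕ)) : ZMod q) = ((p : ZMod q)) ^ k := by push_cast; rfl
  rw [hσ]
  by_cases hpq : p = q
  · subst hpq
    have hc : ((p : ZMod p)) ^ k ≠ 1 := by
      haveI : Fact (1 < p) := ⟨by omega⟩
      rw [ZMod.natCast_self, zero_pow (by omega : k ≠ 0)]
      exact zero_ne_one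
    rw [if_neg hc, if_neg (by tauto), add_zero]
    apply padicValNat.eq_zero_of_not_dvd
    intro hdvd
    have hcast : (((∑ j ∈ Finset.range (α + 1), (p ^ k) ^ j : ℕ)) : ZMod p) = 0 :=
      (ZMod.natCast_eq_zero_iff _ _).mpr hdvd
    rw [Nat.cast_sum] at hcast
    simp only [Nat.cast_pow, ZMod.natCast_self, zero_pow (by omega : k ≠ 0)] at hcast
    rw [Finset.sum_range_succ'] at hcast
    simp at hcast
  · by_cases hpk : ((p : ZMod q)) ^ k = 1
    · rw [if_pos hpk, if_neg (fun h => h.2.1 hpk), add_zero]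
      have hxm1 : q ∣ p ^ k - 1 :=
        (cast_eq_one_iff_dvd (by omega) (by omega)).mp (by rw [hcastx]; exact hpk)
      have hqx : ¬ q ∣ p ^ k := by
        intro h
        have h1 := Nat.dvd_sub h hxm1
        rw [Nat.sub_sub_self (by omega)] at h1
        have := Nat.le_of_dvd one_pos h1
        omega
      have hlte := padicValNat.pow_sub_pow (p := q) (hq.odd_of_ne_two (by omega))
        (x := p ^ k) (y := 1) (by omega) (by simpa using hxm1) hqx hm0
      simp only [one_pow] at hlte
      have hmul : padicValNat q ((p ^ k) ^ (α + 1) - 1) =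
          padicValNat q (∑ j ∈ Finset.range (α + 1), (p ^ k) ^ j) + padicValNat q (p ^ k - 1) := by
        rw [← hid, padicValNat.mul (by omega) (by omega)]
      omega
    · have hqp : ¬ q ∣ p := fun h => hpq ((Nat.prime_dvd_prime_iff_eq hq hp).mp h).symm
      have hx1ndvd : ¬ q ∣ p ^ k - 1 := fun h =>
        hpk (hcastx ▸ (cast_eq_one_iff_dvd (by omega) (by omega)).mpr h)
      have hvx1 : padicValNat q (p ^ k - 1) = 0 := padicValNat.eq_zero_of_not_dvd hx1ndvd
      have hmul : padicValNat q ((p ^ k) ^ (α + 1) - 1) =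
          padicValNat q (∑ j ∈ Finset.range (α + 1), (p ^ k) ^ j) + padicValNat q (p ^ k - 1) := by
        rw [← hid, padicValNat.mul (by omega) (by omega)]
      rw [hvx1, add_zero] at hmul
      by_cases hdvd : orderOf (((p : ZMod q)) ^ k) ∣ α + 1
      · rw [if_neg hpk, if_pos ⟨hpq, hpk, hdvd⟩, zero_add]
        have hpz : (p : ZMod q) ≠ 0 := by
          rw [Ne, ZMod.natCast_eq_zero_iff]; exact hqp
        have hfin : IsOfFinOrder (p : ZMod q) :=
          isOfFinOrder_iff_pow_eq_one.mpr
            ⟨q - 1, by omega, ZMod.pow_card_sub_one_eq_one hpz⟩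
        have hd : 0 < orderOf (p : ZMod q) := hfin.orderOf_pos
        have hdk : orderOf (p : ZMod q) ∣ k * (α + 1) := by
          rw [orderOf_dvd_iff_pow_eq_one, pow_mul]
          exact orderOf_dvd_iff_pow_eq_one.mp hdvd
        have htd : k * (α + 1) = orderOf (p : ZMod q) * (k * (α + 1) / orderOf (p : ZMod q)) :=
          (Nat.mul_div_cancel' hdk).symm
        have hqd : ¬ q ∣ orderOf (p : ZMod q) := by
          intro h
          have h1 : orderOf (p : ZMod q) ∣ q - 1 :=
            orderOf_dvd_of_pow_eq_one (ZMod.pow_card_sub_one_eq_one hpz)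
          have h2 : orderOf (p : ZMod q) ≤ q - 1 := Nat.le_of_dvd (by omega) h1
          have h3 : q ≤ orderOf (p : ZMod q) := Nat.le_of_dvd hd h
          omega
        have ht0 : k * (α + 1) / orderOf (p : ZMod q) ≠ 0 :=
          (Nat.div_pos (Nat.le_of_dvd (Nat.mul_pos (by omega) (by omega)) hdk) hd).ne'
        have hqpd : q ∣ p ^ orderOf (p : ZMod q) - 1 := by
          refine (cast_eq_one_iff_dvd (by omega) (Nat.one_le_pow _ _ hp.pos)).mp ?_
          push_cast
          exact pow_orderOf_eq_one _
        have hqpdn : ¬ q ∣ p ^ orderOf (p : ZMod q) := fun h => hqp (hq.dvd_of_dvd_pow h)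
        have hpd2 : 1 < p ^ orderOf (p : ZMod q) := Nat.one_lt_pow hd.ne' hp.one_lt
        have hlte2 := padicValNat.pow_sub_pow (p := q) (hq.odd_of_ne_two (by omega))
          (x := p ^ orderOf (p : ZMod q)) (y := 1) hpd2 (by simpa using hqpd) hqpdn ht0
        simp only [one_pow] at hlte2
        have hxm : (p ^ k) ^ (α + 1) =
            (p ^ orderOf (p : ZMod q)) ^ (k * (α + 1) / orderOf (p : ZMod q)) := by
          rw [← pow_mul, ← pow_mul, ← htd]
        have hvkm : padicValNat q k + padicValNat q (α + 1) =
            padicValNat q (orderOf (p : ZMod q)) +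
              padicValNat q (k * (α + 1) / orderOf (p : ZMod q)) := by
          rw [← padicValNat.mul (by omega) hm0, ← padicValNat.mul hd.ne' ht0, ← htd]
        have hvd : padicValNat q (orderOf (p : ZMod q)) = 0 :=
          padicValNat.eq_zero_of_not_dvd hqd
        have hcyc := val_pow_ord_sub_one hq hp hqp
        rw [hxm] at hmul
        omega
      · rw [if_neg hpk, if_neg (by tauto), add_zero]
        apply padicValNat.eq_zero_of_not_dvd
        intro h
        have h1 : q ∣ (p ^ k) ^ (α + 1) - 1 := hid ▸ h.mul_right _
        have h2 : (((p ^ k) ^ (α + 1) : ℕ) : ZMod q) = 1 :=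
          (cast_eq_one_iff_dvd (by omega) (Nat.one_le_pow _ _ (by omega))).mpr h1
        push_cast at h2
        exact hdvd (orderOf_dvd_iff_pow_eq_one.mpr h2)

end Helpers

/-- Main theorem: exact formula for `v_q(σ_k(n))` for an odd prime `q`. -/
theorem valuation_sigma_k (n k q : ℕ) (hn : 2 ≤ n) (hk : 1 ≤ k) (hq : q.Prime)
    (hq3 : 3 ≤ q) :
    padicValNat q (sigma k n) =
      (∑ p ∈ n.primeFactors.filter (fun p : ℕ => ((p : ZMod q)) ^ k = 1),
          padicValNat q (n.factorization p + 1)) +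
      ∑ p ∈ n.primeFactors.filter
          (fun p : ℕ => p ≠ q ∧ ((p : ZMod q)) ^ k ≠ 1 ∧
            orderOf (((p : ZMod q)) ^ k) ∣ n.factorization p + 1),
        (padicValNat q (n.factorization p + 1) + padicValNat q k +
          padicValInt q ((cyclotomic (orderOf ((p : ZMod q))) ℤ).eval (p : ℤ))) := by
  haveI : Fact q.Prime := ⟨hq⟩
  have hn0 : n ≠ 0 := by omega
  rw [(isMultiplicative_sigma (k := k)).multiplicative_factorization (sigma k) hn0,
    Finsupp.prod, Nat.support_factorization,
    padicValNat_prod hq (fun p hp => by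
      have : 0 < sigma k (p ^ n.factorization p) := by
        rw [sigma_apply_prime_pow (Nat.prime_of_mem_primeFactors hp)]
        exact Finset.sum_pos (fun j _ => pow_pos (Nat.prime_of_mem_primeFactors hp).pos _)
          ⟨0, Finset.mem_range.mpr (Nat.succ_pos _)⟩
      omega),
    Finset.sum_filter, Finset.sum_filter, ← Finset.sum_add_distrib]
  refine Finset.sum_congr rfl fun p hp => ?_
  exact key_lemma hq hq3 hk (Nat.prime_of_mem_primeFactors hp)
    (Nat.Prime.factorization_pos_of_dvd (Nat.prime_of_mem_primeFactors hp) hn0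
      (Nat.dvd_of_mem_primeFactors hp))
end

section
/- Let n ≥ 2 be an integer and k ≥ 1. Then v_5(σ_2(n)) = ∑_{p^α ∥ n, p ≡ ±1 (mod 5)} v_5(α+1) + ∑_{p^α ∥ n, p ≡ ±2 (mod 5), 2 ∣ α+1} ( v_5(α+1) + v_5(p² + 1) ). -/
open ArithmeticFunction Finset
open scoped ArithmeticFunction.sigma

instance fact5 : Fact (Nat.Prime 5) := ⟨by norm_num⟩

lemma geom_nat (x n : ℕ) (hx : 1 ≤ x) :
    (x - 1) * ∑ j ∈ Finset.range n, x ^ j = x ^ n - 1 := by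
  have h1 : 1 ≤ x ^ n := Nat.one_le_pow _ _ hx
  zify [hx, h1]
  rw [mul_comm]
  exact geom_sum_mul (x : ℤ) n

lemma vS (x n : ℕ) (hx : 2 ≤ x) (hn : n ≠ 0) :
    padicValNat 5 (x - 1) + padicValNat 5 (∑ j ∈ Finset.range n, x ^ j) =
      padicValNat 5 (x ^ n - 1) := by
  have hxn : x ≤ x ^ n := Nat.le_self_pow hn x
  have hS0 : (∑ j ∈ Finset.range n, x ^ j) ≠ 0 := by
    have := geom_nat x n (by omega)
    intro h
    rw [h, mul_zero] at this
    omega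
  rw [← geom_nat x n (by omega), padicValNat.mul (by omega) hS0]

lemma caseB (x n : ℕ) (hx : 4 ≤ x) (hx1 : x % 5 = 1) (hn : n ≠ 0) :
    padicValNat 5 (∑ j ∈ Finset.range n, x ^ j) = padicValNat 5 n := by
  have hlte := padicValNat.pow_sub_pow (p := 5) (x := x) (y := 1) ⟨2, rfl⟩
    (by omega) (by omega) (by omega) hn
  rw [one_pow] at hlte
  have := vS x n (by omega) hn
  rw [hlte] at this
  omega

lemma caseC (x n : ℕ) (hx : 4 ≤ x) (hx4 : x % 5 = 4) (hn : n ≠ 0) :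
    padicValNat 5 (∑ j ∈ Finset.range n, x ^ j) =
      if 2 ∣ n then padicValNat 5 n + padicValNat 5 (x + 1) else 0 := by
  have hx1 : padicValNat 5 (x - 1) = 0 :=
    padicValNat.eq_zero_of_not_dvd (by omega)
  have hkey := vS x n (by omega) hn
  rw [hx1, zero_add] at hkey
  have hx2mod : x ^ 2 % 5 = 1 := by
    rw [Nat.pow_mod, hx4]
  have hx2 : 16 ≤ x ^ 2 := by nlinarith
  split_ifs with h2
  · obtain ⟨m, rfl⟩ := h2
    have hm : m ≠ 0 := by omega
    have hpow : x ^ (2 * m) = (x ^ 2) ^ m := by rw [pow_mul]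
    have hlte := padicValNat.pow_sub_pow (p := 5) (x := x ^ 2) (y := 1) ⟨2, rfl⟩
      (by omega) (by omega) (by omega) hm
    rw [one_pow] at hlte
    have hfac : x ^ 2 - 1 = (x - 1) * (x + 1) := by
      have : (x - 1) * (x + 1) + 1 = x ^ 2 := by
        obtain ⟨y, rfl⟩ : ∃ y, x = y + 1 := ⟨x - 1, by omega⟩
        simp [Nat.add_sub_cancel]
        ring
      omega
    have hv21 : padicValNat 5 (x ^ 2 - 1) = padicValNat 5 (x + 1) := by
      rw [hfac, padicValNat.mul (by omega) (by omega), hx1, zero_add]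
    have hv2m : padicValNat 5 (2 * m) = padicValNat 5 m := by
      rw [padicValNat.mul (by omega) hm,
        padicValNat.eq_zero_of_not_dvd (by omega), zero_add]
    rw [hkey, hpow, hlte, hv21, hv2m, add_comm]
  · -- n odd
    obtain ⟨k, hk⟩ : ∃ k, n = 2 * k + 1 := ⟨n / 2, by omega⟩
    have hmod : x ^ n % 5 = 4 := by
      rw [hk, pow_succ, Nat.mul_mod, pow_mul, Nat.pow_mod, hx2mod, one_pow, hx4]
      norm_num
    have hxn : x ≤ x ^ n := Nat.le_self_pow hn x
    rw [hkey, padicValNat.eq_zero_of_not_dvd (by omega)]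

lemma key (p α : ℕ) (hp : p.Prime) (hα : α ≠ 0) :
    padicValNat 5 (σ 2 (p ^ α)) =
      (if p % 5 = 1 ∨ p % 5 = 4 then padicValNat 5 (α + 1) else 0) +
      (if (p % 5 = 2 ∨ p % 5 = 3) ∧ 2 ∣ α + 1 then
        padicValNat 5 (α + 1) + padicValNat 5 (p ^ 2 + 1) else 0) := by
  have hp2 : 2 ≤ p := hp.two_le
  have hx4 : 4 ≤ p ^ 2 := by nlinarith
  have hS : σ 2 (p ^ α) = ∑ j ∈ Finset.range (α + 1), (p ^ 2) ^ j := by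
    rw [sigma_apply_prime_pow hp]
    exact Finset.sum_congr rfl fun j _ => by rw [mul_comm, pow_mul]
  have hxm : p ^ 2 % 5 = (p % 5) ^ 2 % 5 := Nat.pow_mod p 2 5
  have hm : p % 5 = 0 ∨ p % 5 = 1 ∨ p % 5 = 2 ∨ p % 5 = 3 ∨ p % 5 = 4 := by omega
  rcases hm with h | h | h | h | h
  · -- p = 5
    have hp5 : p = 5 := ((Nat.prime_dvd_prime_iff_eq (by norm_num) hp).mp (by omega)).symm
    subst hp5
    have hdvd : 5 ∣ ∑ j ∈ Finset.range α, (5 ^ 2) ^ (j + 1) :=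
      Finset.dvd_sum fun j _ => ⟨5 * 25 ^ j, by ring⟩
    obtain ⟨T, hT⟩ := hdvd
    have hsum : σ 2 (5 ^ α) = 5 * T + 1 := by
      rw [hS, Finset.sum_range_succ', hT]; norm_num
    rw [hsum]
    simp only [show ¬((5:ℕ) % 5 = 1 ∨ (5:ℕ) % 5 = 4) by norm_num, if_neg, if_false]
    rw [padicValNat.eq_zero_of_not_dvd (by omega)]
    norm_num
  · have hxmod : p ^ 2 % 5 = 1 := by rw [hxm, h]; norm_num
    rw [hS, caseB (p ^ 2) (α + 1) hx4 hxmod (by omega)]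
    simp [h]
  · have hxmod : p ^ 2 % 5 = 4 := by rw [hxm, h]; norm_num
    rw [hS, caseC (p ^ 2) (α + 1) hx4 hxmod (by omega)]
    have hA : ¬(p % 5 = 1 ∨ p % 5 = 4) := by omega
    by_cases h2 : 2 ∣ α + 1
    · rw [if_pos h2, if_neg hA, if_pos ⟨Or.inl h, h2⟩, zero_add]
    · rw [if_neg h2, if_neg hA, if_neg (fun hc => h2 hc.2), zero_add]
  · have hxmod : p ^ 2 % 5 = 4 := by rw [hxm, h]; norm_num
    rw [hS, caseC (p ^ 2) (α + 1) hx4 hxmod (by omega)]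
    have hA : ¬(p % 5 = 1 ∨ p % 5 = 4) := by omega
    by_cases h2 : 2 ∣ α + 1
    · rw [if_pos h2, if_neg hA, if_pos ⟨Or.inr h, h2⟩, zero_add]
    · rw [if_neg h2, if_neg hA, if_neg (fun hc => h2 hc.2), zero_add]
  · have hxmod : p ^ 2 % 5 = 1 := by rw [hxm, h]; norm_num
    rw [hS, caseB (p ^ 2) (α + 1) hx4 hxmod (by omega)]
    simp [h]

lemma padic_prod (s : Finset ℕ) (f : ℕ → ℕ) :
    (∀ i ∈ s, f i ≠ 0) → padicValNat 5 (∏ i ∈ s, f i) = ∑ i ∈ s, padicValNat 5 (f i) := by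
  classical
  induction s using Finset.induction_on with
  | empty => simp
  | @insert a s ha ih =>
    intro hf
    rw [Finset.prod_insert ha, Finset.sum_insert ha,
      padicValNat.mul (hf a (Finset.mem_insert_self a s))
        (Finset.prod_ne_zero_iff.mpr fun i hi => hf i (Finset.mem_insert_of_mem hi)),
      ih fun i hi => hf i (Finset.mem_insert_of_mem hi)]

/-- Example: `v_5(σ_2(n))` formula. -/
theorem valuation_sigma_two_five (n k : ℕ) (hn : 2 ≤ n) (hk : 1 ≤ k) :
    padicValNat 5 (sigma 2 n) =
      (∑ p ∈ n.primeFactors.filter (fun p : ℕ => p % 5 = 1 ∨ p % 5 = 4),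
          padicValNat 5 (n.factorization p + 1)) +
      ∑ p ∈ n.primeFactors.filter
          (fun p : ℕ => (p % 5 = 2 ∨ p % 5 = 3) ∧ 2 ∣ n.factorization p + 1),
        (padicValNat 5 (n.factorization p + 1) + padicValNat 5 (p ^ 2 + 1)) := by
  have hn0 : n ≠ 0 := by omega
  rw [isMultiplicative_sigma.multiplicative_factorization _ hn0]
  rw [Finsupp.prod, Nat.support_factorization]
  rw [padic_prod _ _ (fun p hp => by
    have hp' := Nat.prime_of_mem_primeFactors hp
    have : 0 < σ 2 (p ^ n.factorization p) := by
      rw [sigma_apply_prime_pow hp', Finset.sum_range_succ']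
      simp
    omega)]
  rw [Finset.sum_congr rfl fun p hp =>
    key p (n.factorization p) (Nat.prime_of_mem_primeFactors hp)
      (Nat.Prime.factorization_pos_of_dvd (Nat.prime_of_mem_primeFactors hp) hn0
        (Nat.dvd_of_mem_primeFactors hp)).ne']
  rw [Finset.sum_add_distrib, Finset.sum_filter, Finset.sum_filter]
end
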